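/- Let G be a finite group with trivial-intersection Sylow p-subgroups, Q a Sylow p-subgroup, H = N_G(Q), and let x, y, z be nontrivial elements of Q. Then the class algebra structure constants satisfy a_G(x,y,z) ≡ a_H(x,y,z) (mod p^d), where p^d is the p-part of |C_G(z)|. -/

import Mathlib

section Aux

variable {G : Type*} [Group G] [Finite G] {p : ℕ} [Fact p.Prime]

/-- Any `p`-subgroup containing a nontrivial element of `Q` lies in `Q` (TI hypothesis). -/
lemma TI.le_sylow (hTI : ∀ Q₁ Q₂ : Sylow p G, (Q₁ : Subgroup G) ≠ Q₂ → (Q₁ : Subgroup G) ⊓ Q₂ = ⊥)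
    (Q : Sylow p G) {c : G} (hc : c ∈ Q) (hc1 : c ≠ 1)
    {K : Subgroup G} (hK : IsPGroup p K) (hcK : c ∈ K) : K ≤ Q := by
  obtain ⟨R, hR⟩ := hK.exists_le_sylow
  rcases eq_or_ne (R : Subgroup G) (Q : Subgroup G) with h | h
  · exact h ▸ hR
  · have hmem : c ∈ (R : Subgroup G) ⊓ (Q : Subgroup G) := ⟨hR hcK, hc⟩
    rw [hTI R Q h, Subgroup.mem_bot] at hmem
    exact absurd hmem hc1

lemma zpowers_le_normalizer_zpowers {c g : G} (h : Commute c g) :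
    Subgroup.zpowers c ≤ Subgroup.normalizer ((Subgroup.zpowers g : Subgroup G) : Set G) := by
  rw [Subgroup.zpowers_le, Subgroup.mem_normalizer_iff]
  intro h'
  constructor
  · intro hh
    obtain ⟨k, rfl⟩ := Subgroup.mem_zpowers_iff.mp hh
    exact Subgroup.mem_zpowers_iff.mpr ⟨k, by rw [(h.zpow_right k).eq, mul_inv_cancel_right]⟩
  · intro hh
    obtain ⟨k, hk⟩ := Subgroup.mem_zpowers_iff.mp hh
    refine Subgroup.mem_zpowers_iff.mpr ⟨k, ?_⟩
    have h2 : c * g ^ k * c⁻¹ = c * h' * c⁻¹ := by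
      rw [(h.zpow_right k).eq, mul_inv_cancel_right, hk]
    exact mul_left_cancel (mul_right_cancel h2)

/-- A `p`-element commuting with a nontrivial element of `Q` lies in `Q`. -/
lemma TI.mem_sylow_of_commute
    (hTI : ∀ Q₁ Q₂ : Sylow p G, (Q₁ : Subgroup G) ≠ Q₂ → (Q₁ : Subgroup G) ⊓ Q₂ = ⊥)
    (Q : Sylow p G) {c g : G} (hc : c ∈ Q) (hc1 : c ≠ 1)
    (hg : IsPGroup p (Subgroup.zpowers g)) (hcg : Commute c g) : g ∈ Q := by
  have hcp : IsPGroup p (Subgroup.zpowers c) :=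
    Q.isPGroup'.to_le (Subgroup.zpowers_le.mpr hc)
  have hsup : IsPGroup p (Subgroup.zpowers c ⊔ Subgroup.zpowers g : Subgroup G) :=
    IsPGroup.to_sup_of_normal_right' hcp hg (zpowers_le_normalizer_zpowers hcg)
  exact TI.le_sylow hTI Q hc hc1 hsup (Subgroup.mem_sup_left (Subgroup.mem_zpowers c))
    (Subgroup.mem_sup_right (Subgroup.mem_zpowers g))

/-- Conjugates of a `p`-element are `p`-elements. -/
lemma IsConj.isPGroup_zpowers {x u : G} (hx : IsPGroup p (Subgroup.zpowers x))
    (h : IsConj x u) : IsPGroup p (Subgroup.zpowers u) := by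
  obtain ⟨n, hn⟩ := IsPGroup.iff_card.mp hx
  obtain ⟨c, hc⟩ := isConj_iff.mp h
  have hsc : SemiconjBy c x u := by
    show c * x = u * c
    rw [← hc, mul_assoc, inv_mul_cancel, mul_one]
  refine IsPGroup.iff_card.mpr ⟨n, ?_⟩
  rw [Nat.card_zpowers] at hn ⊢
  rw [← hsc.orderOf_eq c]
  exact hn

/-- The conjugator of an element of `Q` to an element of `Q` normalizes `Q` (TI hypothesis). -/
lemma TI.conj_mem_normalizer
    (hTI : ∀ Q₁ Q₂ : Sylow p G, (Q₁ : Subgroup G) ≠ Q₂ → (Q₁ : Subgroup G) ⊓ Q₂ = ⊥)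
    (Q : Sylow p G) {x u c : G} (hx : x ∈ Q) (hx1 : x ≠ 1)
    (hu : u ∈ Q) (hc : c * x * c⁻¹ = u) : c ∈ Subgroup.normalizer ((Q : Subgroup G) : Set G) := by
  have hxc : x = c⁻¹ * u * c := by rw [← hc]; group
  have hu1 : u ≠ 1 := by
    rintro rfl
    apply hx1
    rw [hxc]; group
  rcases eq_or_ne ((c • Q : Sylow p G) : Subgroup G) (Q : Subgroup G) with h | h
  · exact Sylow.smul_eq_iff_mem_normalizer.mp (Sylow.ext h)
  · exfalso
    have huR : u ∈ ((c • Q : Sylow p G) : Subgroup G) := by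
      rw [Sylow.coe_subgroup_smul]
      refine Subgroup.mem_pointwise_smul_iff_inv_smul_mem.mpr ?_
      have : (MulAut.conj c)⁻¹ • u = c⁻¹ * u * c := by
        simp [MulAut.smul_def, ← map_inv]
      rw [this, ← hxc]
      exact hx
    have hmem : u ∈ ((c • Q : Sylow p G) : Subgroup G) ⊓ (Q : Subgroup G) := ⟨huR, hu⟩
    rw [hTI _ _ h, Subgroup.mem_bot] at hmem
    exact hu1 hmem

/-- The off-`Q` part of the structure-constant set. -/
abbrev TIType (G : Type*) [Group G] (x y z : G) (Q : Subgroup G) : Type _ :=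
  {q : G × G // (IsConj x q.1 ∧ IsConj y q.2 ∧ q.1 * q.2 = z) ∧ q.1 ∉ Q}

/-- Conjugation action of a subgroup of `C_G(z) ⊓ Q` on the off-`Q` part. -/
def tiAction {G : Type*} [Group G] {x y z : G} {Q : Subgroup G} (K : Subgroup G)
    (hKz : ∀ g ∈ K, g * z = z * g) (hKQ : K ≤ Q) : MulAction K (TIType G x y z Q) where
  smul g s := ⟨((g : G) * s.1.1 * (g : G)⁻¹, (g : G) * s.1.2 * (g : G)⁻¹, ), by
    obtain ⟨⟨h1, h2, h3⟩, h4⟩ := s.2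
    refine ⟨⟨h1.trans (isConj_iff.mpr ⟨g, rfl⟩), h2.trans (isConj_iff.mpr ⟨g, rfl⟩), ?_⟩, ?_⟩
    · have : (g : G) * s.1.1 * (g : G)⁻¹ * ((g : G) * s.1.2 * (g : G)⁻¹)
          = (g : G) * (s.1.1 * s.1.2) * (g : G)⁻¹ := by group
      rw [this, h3, hKz (g : G) g.2, mul_inv_cancel_right]
    · intro hmem
      apply h4
      have hgQ : (g : G) ∈ Q := hKQ g.2
      have : (g : G)⁻¹ * ((g : G) * s.1.1 * (g : G)⁻¹) * (g : G) ∈ Q :=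
        mul_mem (mul_mem (inv_mem hgQ) hmem) hgQ
      have he : (g : G)⁻¹ * ((g : G) * s.1.1 * (g : G)⁻¹) * (g : G) = s.1.1 := by group
      rwa [he] at this⟩
  one_smul s := by
    apply Subtype.ext
    show ((1 : G) * s.1.1 * (1 : G)⁻¹, (1 : G) * s.1.2 * (1 : G)⁻¹) = s.1
    simp
  mul_smul g h s := by
    apply Subtype.ext
    show (((g * h : K) : G) * s.1.1 * ((g * h : K) : G)⁻¹,
        ((g * h : K) : G) * s.1.2 * ((g * h : K) : G)⁻¹)
      = ((g : G) * ((h : G) * s.1.1 * (h : G)⁻¹) * (g : G)⁻¹,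
        (g : G) * ((h : G) * s.1.2 * (h : G)⁻¹) * (g : G)⁻¹)
    refine Prod.ext ?_ ?_ <;> · push_cast; group

end Aux

/-- The class algebra structure constant `a(x,y,z)` of a group `K`. -/
noncomputable def classConst (K : Type*) [Group K] (x y z : K) : ℕ :=
  Nat.card {p : K × K // IsConj x p.1 ∧ IsConj y p.2 ∧ p.1 * p.2 = z}

set_option maxHeartbeats 1600000 in
/-- For a finite group with trivial-intersection Sylow `p`-subgroups, `Q` a Sylow
`p`-subgroup, `H = N_G(Q)` and nontrivial `x, y, z ∈ Q`, one has
`a_G(x,y,z) ≡ a_H(x,y,z) mod |C_G(z)|_p`. -/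
theorem classConst_congr_normalizer_of_TI {G : Type*} [Group G] [Finite G] (p : ℕ)
    [Fact p.Prime]
    (hTI : ∀ Q₁ Q₂ : Sylow p G, (Q₁ : Subgroup G) ≠ Q₂ → (Q₁ : Subgroup G) ⊓ Q₂ = ⊥)
    (Q : Sylow p G) (x y z : G) (hx : x ∈ Q) (hy : y ∈ Q) (hz : z ∈ Q)
    (hx1 : x ≠ 1) (hy1 : y ≠ 1) (hz1 : z ≠ 1) :
    classConst G x y z ≡
      classConst (Subgroup.normalizer ((Q : Subgroup G) : Set G))
        ⟨x, Subgroup.le_normalizer hx⟩ ⟨y, Subgroup.le_normalizer hy⟩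
        ⟨z, Subgroup.le_normalizer hz⟩
      [MOD p ^ ((Nat.card (Subgroup.centralizer {z})).factorization p)] := by
  classical
  set H : Subgroup G := Subgroup.normalizer ((Q : Subgroup G) : Set G) with hHdef
  set d : ℕ := (Nat.card (Subgroup.centralizer ({z} : Set G))).factorization p with hd
  set C : Subgroup G := Subgroup.centralizer ({z} : Set G) with hC
  obtain ⟨P₀⟩ : Nonempty (Sylow p C) := inferInstance
  set P : Subgroup G := (P₀ : Subgroup C).map C.subtype with hPdef
  have hPcard : Nat.card P = p ^ d := by
    have h1 : Nat.card P = Nat.card P₀ :=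
      Nat.card_congr (Subgroup.equivMapOfInjective (P₀ : Subgroup C) C.subtype
        C.subtype_injective).toEquiv.symm
    rw [h1, P₀.card_eq_multiplicity]
  have hPp : IsPGroup p P := P₀.isPGroup'.map C.subtype
  have hPz : ∀ g ∈ P, g * z = z * g := by
    rintro g ⟨g₀, _, rfl⟩
    exact (Subgroup.mem_centralizer_iff.mp g₀.2 z rfl).symm
  have hPQ : P ≤ (Q : Subgroup G) := by
    have hzp : IsPGroup p (Subgroup.zpowers z) :=
      Q.isPGroup'.to_le (Subgroup.zpowers_le.mpr hz)
    have hnorm : P ≤ Subgroup.normalizer ((Subgroup.zpowers z : Subgroup G) : Set G) := fun g hg =>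
      zpowers_le_normalizer_zpowers (show Commute g z from hPz g hg) (Subgroup.mem_zpowers g)
    have hsup : IsPGroup p (P ⊔ Subgroup.zpowers z : Subgroup G) :=
      IsPGroup.to_sup_of_normal_right' hPp hzp hnorm
    exact le_trans le_sup_left
      (TI.le_sylow hTI Q hz hz1 hsup (Subgroup.mem_sup_right (Subgroup.mem_zpowers z)))
  -- v ∈ Q from u ∈ Q and u * v = z
  have hvQ : ∀ u v : G, u ∈ (Q : Subgroup G) → u * v = z → v ∈ (Q : Subgroup G) := by
    intro u v hu huv
    have : v = u⁻¹ * z := by rw [← huv]; group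
    rw [this]; exact mul_mem (inv_mem hu) hz
  -- conjugacy transfer to H
  have hconjH : ∀ (w u : G) (hw : w ∈ (Q : Subgroup G)) (_ : w ≠ 1)
      (hu : u ∈ (Q : Subgroup G)), IsConj w u →
      IsConj (⟨w, Subgroup.le_normalizer hw⟩ : H) ⟨u, Subgroup.le_normalizer hu⟩ := by
    intro w u hw hw1 hu hconj
    obtain ⟨c, hc⟩ := isConj_iff.mp hconj
    have hcH : c ∈ H := TI.conj_mem_normalizer hTI Q hw hw1 hu hc
    exact isConj_iff.mpr ⟨⟨c, hcH⟩, Subtype.ext hc⟩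
  have hconjG : ∀ (w : G) (hw : w ∈ (Q : Subgroup G)) (u : H),
      IsConj (⟨w, Subgroup.le_normalizer hw⟩ : H) u → IsConj w (u : G) ∧ (u : G) ∈ (Q : Subgroup G) := by
    intro w hw u hconj
    obtain ⟨c, hc⟩ := isConj_iff.mp hconj
    have hG : (c : G) * w * (c : G)⁻¹ = (u : G) := congrArg Subtype.val hc
    refine ⟨isConj_iff.mpr ⟨(c : G), hG⟩, ?_⟩
    rw [← hG]
    exact (Subgroup.mem_normalizer_iff.mp c.2 w).mp hw
  -- splitting
  have hsplit : classConst G x y z =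
      Nat.card {q : G × G //
        (IsConj x q.1 ∧ IsConj y q.2 ∧ q.1 * q.2 = z) ∧ q.1 ∈ (Q : Subgroup G)} +
      Nat.card (TIType G x y z (Q : Subgroup G)) := by
    have e0 : {s : {q : G × G // IsConj x q.1 ∧ IsConj y q.2 ∧ q.1 * q.2 = z} //
          s.1.1 ∈ (Q : Subgroup G)} ⊕
        {s : {q : G × G // IsConj x q.1 ∧ IsConj y q.2 ∧ q.1 * q.2 = z} //
          ¬ s.1.1 ∈ (Q : Subgroup G)} ≃
        {q : G × G // IsConj x q.1 ∧ IsConj y q.2 ∧ q.1 * q.2 = z} :=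
      Equiv.sumCompl _
    have eA : {s : {q : G × G // IsConj x q.1 ∧ IsConj y q.2 ∧ q.1 * q.2 = z} //
        s.1.1 ∈ (Q : Subgroup G)} ≃ {q : G × G //
        (IsConj x q.1 ∧ IsConj y q.2 ∧ q.1 * q.2 = z) ∧ q.1 ∈ (Q : Subgroup G)} :=
      Equiv.subtypeSubtypeEquivSubtypeInter
        (fun q : G × G => IsConj x q.1 ∧ IsConj y q.2 ∧ q.1 * q.2 = z)
        (fun q : G × G => q.1 ∈ (Q : Subgroup G))
    have eT : {s : {q : G × G // IsConj x q.1 ∧ IsConj y q.2 ∧ q.1 * q.2 = z} //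
        ¬ s.1.1 ∈ (Q : Subgroup G)} ≃ TIType G x y z (Q : Subgroup G) :=
      Equiv.subtypeSubtypeEquivSubtypeInter
        (fun q : G × G => IsConj x q.1 ∧ IsConj y q.2 ∧ q.1 * q.2 = z)
        (fun q : G × G => ¬ q.1 ∈ (Q : Subgroup G))
    calc classConst G x y z
        = Nat.card ({s : {q : G × G // IsConj x q.1 ∧ IsConj y q.2 ∧ q.1 * q.2 = z} //
            s.1.1 ∈ (Q : Subgroup G)} ⊕
          {s : {q : G × G // IsConj x q.1 ∧ IsConj y q.2 ∧ q.1 * q.2 = z} //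
            ¬ s.1.1 ∈ (Q : Subgroup G)}) := (Nat.card_congr e0).symm
      _ = _ + _ := by rw [Nat.card_sum, Nat.card_congr eA, Nat.card_congr eT]
  -- A counts the H-structure constant
  have hAcard : Nat.card {q : G × G //
      (IsConj x q.1 ∧ IsConj y q.2 ∧ q.1 * q.2 = z) ∧ q.1 ∈ (Q : Subgroup G)} = classConst H
      ⟨x, Subgroup.le_normalizer hx⟩ ⟨y, Subgroup.le_normalizer hy⟩
      ⟨z, Subgroup.le_normalizer hz⟩ := by
    refine Nat.card_congr ⟨fun s => ⟨(⟨s.1.1, Subgroup.le_normalizer s.2.2⟩,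
        ⟨s.1.2, Subgroup.le_normalizer (hvQ _ _ s.2.2 s.2.1.2.2)⟩),
        hconjH x s.1.1 hx hx1 s.2.2 s.2.1.1,
        hconjH y s.1.2 hy hy1 (hvQ _ _ s.2.2 s.2.1.2.2) s.2.1.2.1,
        Subtype.ext s.2.1.2.2⟩,
      fun s => ⟨((s.1.1 : G), (s.1.2 : G)),
        ⟨(hconjG x hx s.1.1 s.2.1).1, (hconjG y hy s.1.2 s.2.2.1).1,
          congrArg Subtype.val s.2.2.2⟩, (hconjG x hx s.1.1 s.2.1).2⟩,
      fun s => Subtype.ext rfl,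
      fun s => Subtype.ext (Prod.ext (Subtype.ext rfl) (Subtype.ext rfl))⟩
  -- divisibility of the off-Q part
  have hdvd : p ^ d ∣ Nat.card (TIType G x y z (Q : Subgroup G)) := by
    letI : MulAction P (TIType G x y z (Q : Subgroup G)) := tiAction P hPz hPQ
    have hxp : IsPGroup p (Subgroup.zpowers x) :=
      Q.isPGroup'.to_le (Subgroup.zpowers_le.mpr hx)
    have hstab : ∀ s : TIType G x y z (Q : Subgroup G), MulAction.stabilizer P s = ⊥ := by
      intro s
      rw [Subgroup.eq_bot_iff_forall]
      intro g hg
      by_contra hg1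
      have hgs : g • s = s := hg
      have hfix : (g : G) * s.1.1 * (g : G)⁻¹ = s.1.1 :=
        congrArg (fun t => t.1.1) hgs
      have hcomm : Commute (g : G) s.1.1 := by
        have := hfix
        rw [mul_inv_eq_iff_eq_mul] at this
        exact this
      have hg1' : (g : G) ≠ 1 := fun h => hg1 (Subtype.ext h)
      exact s.2.2 (TI.mem_sylow_of_commute hTI Q (hPQ g.2) hg1'
        (IsConj.isPGroup_zpowers hxp s.2.1.1) hcomm)
    have orbEquiv : ∀ s : TIType G x y z (Q : Subgroup G), P ≃ MulAction.orbit P s := by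
      intro s
      refine Equiv.ofBijective (fun g => ⟨g • s, MulAction.mem_orbit s g⟩) ⟨?_, ?_⟩
      · intro g h hgh
        have h1 : g • s = h • s := congrArg Subtype.val hgh
        have h2 : (h⁻¹ * g) • s = s := by
          rw [mul_smul, h1, ← mul_smul, inv_mul_cancel, one_smul]
        have h3 : h⁻¹ * g ∈ MulAction.stabilizer P s := h2
        rw [hstab s, Subgroup.mem_bot] at h3
        exact (inv_mul_eq_one.mp h3).symm
      · rintro ⟨t, g, rfl⟩
        exact ⟨g, rfl⟩
    have e : TIType G x y z (Q : Subgroup G) ≃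
        MulAction.orbitRel.Quotient P (TIType G x y z (Q : Subgroup G)) × P :=
      (MulAction.selfEquivSigmaOrbits P (TIType G x y z (Q : Subgroup G))).trans
        ((Equiv.sigmaCongrRight (fun ω : MulAction.orbitRel.Quotient P (TIType G x y z (Q : Subgroup G)) => (orbEquiv ω.out).symm)).trans
          (Equiv.sigmaEquivProd _ _))
    rw [Nat.card_congr e, Nat.card_prod, hPcard]
    exact Dvd.intro_left _ rfl
  rw [hsplit, hAcard]
  have hT0 : Nat.card (TIType G x y z (Q : Subgroup G)) ≡ 0 [MOD p ^ d] :=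
    (Nat.modEq_zero_iff_dvd).mpr hdvd
  calc classConst H ⟨x, Subgroup.le_normalizer hx⟩ ⟨y, Subgroup.le_normalizer hy⟩
        ⟨z, Subgroup.le_normalizer hz⟩ + Nat.card (TIType G x y z (Q : Subgroup G))
      ≡ classConst H ⟨x, Subgroup.le_normalizer hx⟩ ⟨y, Subgroup.le_normalizer hy⟩
        ⟨z, Subgroup.le_normalizer hz⟩ + 0 [MOD p ^ d] := Nat.ModEq.add_left _ hT0
    _ = _ := by rw [add_zero]
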